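/- arXiv:0904.0144 — 6 statements merged into one kernel-verified Lean document; each statement's English description precedes it below -/
import Mathlib

section
/- Let Σ be a k×k positive definite correlation matrix, b ∈ ℝ^k \ (-∞,0]^k, b̃ the unique minimizer of the quadratic program min{xᵀΣ⁻¹x : x ≥ b} with active index set I. Then for every x ∈ ℝ^k, xᵀΣ⁻¹b̃ = x_Iᵀ(Σ_{II})⁻¹ b_I. -/
open Matrix

lemma sum_supported {k : ℕ} (I : Finset (Fin k)) (f : Fin k → ℝ)
    (hf : ∀ j ∉ I, f j = 0) :
    ∑ j, f j = ∑ i : {i // i ∈ I}, f i := by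
  rw [Finset.sum_coe_sort I f]
  exact (Finset.sum_subset (Finset.subset_univ I) (fun x _ hx => hf x hx)).symm

lemma posdef_sub {k : ℕ} (S : Matrix (Fin k) (Fin k) ℝ) (hS : S.PosDef) (I : Finset (Fin k)) :
    (S.submatrix (fun i : {i // i ∈ I} => (i : Fin k))
      (fun i : {i // i ∈ I} => (i : Fin k))).PosDef := by
  classical
  refine Matrix.PosDef.of_dotProduct_mulVec_pos (hS.1.submatrix _) fun x hx => ?_
  set y : Fin k → ℝ := fun j => if h : j ∈ I then x ⟨j, h⟩ else 0 with hy
  have hy0 : y ≠ 0 := by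
    obtain ⟨i, hi⟩ : ∃ i, x i ≠ 0 := by
      by_contra h; push_neg at h; exact hx (funext h)
    intro h
    apply hi
    have := congrFun h (i : Fin k)
    simpa [hy, i.2] using this
  have key : dotProduct (star x)
      ((S.submatrix (fun i : {i // i ∈ I} => (i : Fin k))
        (fun i : {i // i ∈ I} => (i : Fin k))) *ᵥ x)
      = dotProduct (star y) (S *ᵥ y) := by
    simp only [dotProduct, mulVec, star, RCLike.star_def, starRingEnd_apply, star_trivial, id_eq]
    rw [sum_supported I (fun j => y j * ∑ l, S j l * y l) (by
      intro j hj; simp [hy, hj])]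
    refine Finset.sum_congr rfl fun i _ => ?_
    have h1 : y (i : Fin k) = x i := by simp [hy, i.2]
    rw [h1]
    congr 1
    rw [sum_supported I (fun l => S (i : Fin k) l * y l) (by
      intro l hl; simp [hy, hl])]
    refine Finset.sum_congr rfl fun l _ => ?_
    simp [hy, l.2]
  rw [key]
  exact hS.dotProduct_mulVec_pos hy0

/-- For the quadratic program `min xᵀΣ⁻¹x` over `{x ≥ b}` with minimizer `bt` and active
index set `I`, one has `xᵀΣ⁻¹bt = x_Iᵀ(Σ_{II})⁻¹ b_I` for every `x ∈ ℝ^k`. -/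
theorem quadratic_program_dot_identity
    {k : ℕ} (hk : 2 ≤ k)
    (S : Matrix (Fin k) (Fin k) ℝ) (hS : S.PosDef)
    (hdiag : ∀ i, S i i = 1)
    (b : Fin k → ℝ) (hb : ∃ i, 0 < b i)
    (bt : Fin k → ℝ) (hbt_feas : ∀ i, b i ≤ bt i)
    (hbt_min : ∀ x : Fin k → ℝ, (∀ i, b i ≤ x i) →
      bt ⬝ᵥ S⁻¹ *ᵥ bt ≤ x ⬝ᵥ S⁻¹ *ᵥ x)
    (I : Finset (Fin k)) (hI : I.Nonempty)
    (hactive : ∀ i ∈ I, bt i = b i)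
    (hpos : ∀ i : {i // i ∈ I},
      0 < ((S.submatrix (fun i : {i // i ∈ I} => (i : Fin k))
            (fun i : {i // i ∈ I} => (i : Fin k)))⁻¹ *ᵥ (fun i : {i // i ∈ I} => b i)) i)
    (hinactive : (fun j : {j // j ∉ I} => bt (j : Fin k)) =
      (S.submatrix (fun j : {j // j ∉ I} => (j : Fin k))
          (fun i : {i // i ∈ I} => (i : Fin k))) *ᵥ
        ((S.submatrix (fun i : {i // i ∈ I} => (i : Fin k))
            (fun i : {i // i ∈ I} => (i : Fin k)))⁻¹ *ᵥ (fun i : {i // i ∈ I} => b i))) :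
    ∀ x : Fin k → ℝ,
      x ⬝ᵥ S⁻¹ *ᵥ bt =
        (fun i : {i // i ∈ I} => x (i : Fin k)) ⬝ᵥ
          (S.submatrix (fun i : {i // i ∈ I} => (i : Fin k))
            (fun i : {i // i ∈ I} => (i : Fin k)))⁻¹ *ᵥ (fun i : {i // i ∈ I} => b i) := by
  classical
  intro x
  set A := S.submatrix (fun i : {i // i ∈ I} => (i : Fin k))
      (fun i : {i // i ∈ I} => (i : Fin k)) with hA
  set c := A⁻¹ *ᵥ (fun i : {i // i ∈ I} => b i) with hc
  have hApd : A.PosDef := posdef_sub S hS I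
  have hAdet : IsUnit A.det := isUnit_iff_ne_zero.2 hApd.det_pos.ne'
  have hAc : A *ᵥ c = fun i : {i // i ∈ I} => b i := by
    rw [hc, mulVec_mulVec, Matrix.mul_nonsing_inv A hAdet, one_mulVec]
  set v : Fin k → ℝ := fun j => if h : j ∈ I then c ⟨j, h⟩ else 0 with hv
  have hSv : S *ᵥ v = bt := by
    funext j
    have hsum : (S *ᵥ v) j = ∑ i : {i // i ∈ I}, S j (i : Fin k) * c i := by
      show (∑ l, S j l * v l) = _
      rw [sum_supported I (fun l => S j l * v l) (by intro l hl; simp [hv, hl])]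
      refine Finset.sum_congr rfl fun i _ => ?_
      simp [hv, i.2]
    by_cases hj : j ∈ I
    · rw [hsum, hactive j hj]
      have := congrFun hAc ⟨j, hj⟩
      simpa [mulVec, dotProduct, hA, submatrix_apply] using this
    · rw [hsum]
      have := congrFun hinactive ⟨j, hj⟩
      simp only [mulVec, dotProduct, submatrix_apply] at this
      exact this.symm
  have hSinv : S⁻¹ *ᵥ bt = v := by
    rw [← hSv, mulVec_mulVec, Matrix.nonsing_inv_mul S (isUnit_iff_ne_zero.2 hS.det_pos.ne'),
      one_mulVec]
  rw [hSinv]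
  show (∑ l, x l * v l) = ∑ i : {i // i ∈ I}, x (i : Fin k) * c i
  rw [sum_supported I (fun l => x l * v l) (by intro l hl; simp [hv, hl])]
  refine Finset.sum_congr rfl fun i _ => ?_
  simp [hv, i.2]
end

section
/- Let Σ be a k×k positive definite correlation matrix and c > 0. Then the active index set I of the quadratic program min{xᵀΣ⁻¹x : x ≥ c·1} (where 1 is the all-ones vector) satisfies |I| ≥ 2. -/
open Matrix

private lemma quad_expand {k : ℕ} (A : Matrix (Fin k) (Fin k) ℝ) (hsym : Aᵀ = A)
    (bt : Fin k → ℝ) (j : Fin k) (t : ℝ) :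
    (bt + t • (Pi.single j 1 : Fin k → ℝ)) ⬝ᵥ A *ᵥ (bt + t • (Pi.single j 1 : Fin k → ℝ))
      = bt ⬝ᵥ A *ᵥ bt + t * (2 * (A *ᵥ bt) j + t * A j j) := by
  have hswap : bt ⬝ᵥ A *ᵥ (Pi.single j 1) = (A *ᵥ bt) j := by
    rw [Matrix.dotProduct_mulVec, ← Matrix.mulVec_transpose, hsym, dotProduct_single,
      mul_one]
  simp only [Matrix.mulVec_add, Matrix.mulVec_smul, dotProduct_add,
    add_dotProduct, smul_dotProduct, dotProduct_smul,
    Matrix.mulVec_single_one, hswap, smul_eq_mul]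
  have h1 : (Pi.single j (1:ℝ)) ⬝ᵥ (fun i => A i j) = A j j := by
    rw [single_dotProduct]; ring
  have h2 : (Pi.single j (1:ℝ)) ⬝ᵥ (A *ᵥ bt) = (A *ᵥ bt) j := by
    rw [single_dotProduct]; ring
  have h3 : bt ⬝ᵥ (fun i => A i j) = (A *ᵥ bt) j := by
    have := hswap
    exact (by simpa [Matrix.mulVec_single_one] using this : bt ⬝ᵥ A.col j = _)
  erw [h1, h2, h3]
  ring

/-- If the constraint vector of the quadratic program `min xᵀΣ⁻¹x : x ≥ c·1` (with `c > 0`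
and `Σ` a positive definite correlation matrix) is constant, then the active index set of
the unique minimizer has at least two elements. -/
theorem quadratic_program_constant_threshold_active_card
    {k : ℕ} (hk : 2 ≤ k)
    (S : Matrix (Fin k) (Fin k) ℝ) (hS : S.PosDef)
    (hdiag : ∀ i, S i i = 1)
    (c : ℝ) (hc : 0 < c)
    (bt : Fin k → ℝ) (hbt_feas : ∀ i, c ≤ bt i)
    (hbt_min : ∀ x : Fin k → ℝ, (∀ i, c ≤ x i) →
      bt ⬝ᵥ S⁻¹ *ᵥ bt ≤ x ⬝ᵥ S⁻¹ *ᵥ x) :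
    2 ≤ (Finset.univ.filter (fun i => bt i = c)).card := by
  set A := S⁻¹ with hA
  have hApd : A.PosDef := hS.inv
  have hAsym : Aᵀ = A := hApd.1
  have hSsym : Sᵀ = S := hS.1
  -- diagonal of A positive
  have hAdiag : ∀ j, 0 < A j j := by
    intro j
    have h := hApd.dotProduct_mulVec_pos (x := Pi.single j 1) (by
      intro h
      have := congrFun h j
      simp at this)
    simpa [Matrix.mulVec_single, single_dotProduct] using h
  set g := A *ᵥ bt with hg
  -- first-order condition at inactive coordinates
  have key : ∀ j : Fin k, bt j ≠ c → g j = 0 := by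
    intro j hj
    have hjgt : c < bt j := lt_of_le_of_ne (hbt_feas j) (Ne.symm hj)
    set ε := bt j - c with hε
    have hεpos : 0 < ε := by simp [hε]; linarith
    -- for |t| ≤ ε, bt + t • e_j is feasible
    have feas : ∀ t : ℝ, |t| ≤ ε → ∀ i, c ≤ (bt + t • (Pi.single j 1 : Fin k → ℝ)) i := by
      intro t ht i
      by_cases hij : i = j
      · subst hij
        have : -ε ≤ t := (abs_le.mp ht).1
        simp only [Pi.add_apply, Pi.smul_apply, Pi.single_eq_same, smul_eq_mul, mul_one]
        linarith
      · simp only [Pi.add_apply, Pi.smul_apply, Pi.single_eq_of_ne hij, smul_eq_mul, mul_zero,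
          add_zero]
        exact hbt_feas i
    have quad : ∀ t : ℝ, |t| ≤ ε → 0 ≤ t * (2 * g j + t * A j j) := by
      intro t ht
      have := hbt_min _ (feas t ht)
      rw [quad_expand A hAsym bt j t] at this
      linarith
    by_contra hgj
    rcases lt_or_gt_of_ne hgj with hneg | hpos
    · -- g j < 0 : take small t > 0
      set t := min ε (-g j / A j j) with htdef
      have htpos : 0 < t := lt_min hεpos (div_pos (by linarith) (hAdiag j))
      have h1 := quad t (by rw [abs_of_pos htpos]; exact min_le_left _ _)
      have h2 : t * A j j ≤ -g j := by
        have h := mul_le_mul_of_nonneg_right (min_le_right ε (-g j / A j j)) (hAdiag j).le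
        rwa [div_mul_cancel₀ _ (hAdiag j).ne'] at h
      nlinarith
    · -- g j > 0 : take small t < 0
      set t := -(min ε (g j / A j j)) with htdef
      have htm : 0 < min ε (g j / A j j) := lt_min hεpos (div_pos hpos (hAdiag j))
      have htneg : t < 0 := by rw [htdef]; exact neg_lt_zero.mpr htm
      have h1 := quad t (by rw [abs_of_neg htneg, htdef, neg_neg]; exact min_le_left _ _)
      have h2 : -(t * A j j) ≤ g j := by
        rw [htdef, neg_mul, neg_neg]
        have h := mul_le_mul_of_nonneg_right (min_le_right ε (g j / A j j)) (hAdiag j).le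
        rwa [div_mul_cancel₀ _ (hAdiag j).ne'] at h
      nlinarith
  -- now suppose the active set has ≤ 1 elements
  by_contra hcard
  push_neg at hcard
  interval_cases h : (Finset.univ.filter (fun i => bt i = c)).card
  · -- empty active set: g = 0 so bt = 0, contradiction
    have hempty : (Finset.univ.filter (fun i => bt i = c)) = ∅ := Finset.card_eq_zero.mp h
    have hg0 : g = 0 := by
      funext j
      apply key j
      intro hbtj
      have : j ∈ Finset.univ.filter (fun i => bt i = c) := by simp [hbtj]
      rw [hempty] at this; simp at this
    have hbt0 : bt = 0 := by
      have hdet : IsUnit S.det := hS.det_pos.ne'.isUnit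
      have : S *ᵥ (A *ᵥ bt) = bt := by
        rw [hA, Matrix.mulVec_mulVec, Matrix.mul_nonsing_inv S hdet, Matrix.one_mulVec]
      rw [← this, ← hg, hg0, Matrix.mulVec_zero]
    have h0 : Fin k := ⟨0, by omega⟩
    have := hbt_feas h0
    rw [hbt0] at this
    simp at this
    linarith
  · -- singleton active set {i₀}
    obtain ⟨i₀, hi₀⟩ := Finset.card_eq_one.mp h
    have hbti₀ : bt i₀ = c := by
      have : i₀ ∈ Finset.univ.filter (fun i => bt i = c) := by rw [hi₀]; simp
      simpa using this
    have hgoff : ∀ j, j ≠ i₀ → g j = 0 := by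
      intro j hj
      apply key j
      intro hbtj
      have : j ∈ Finset.univ.filter (fun i => bt i = c) := by simp [hbtj]
      rw [hi₀] at this
      exact hj (Finset.mem_singleton.mp this)
    -- g = Pi.single i₀ (g i₀)
    have hgsingle : g = Pi.single i₀ (g i₀) := by
      funext j
      by_cases hj : j = i₀
      · subst hj; simp
      · rw [hgoff j hj, Pi.single_eq_of_ne hj]
    -- bt = S *ᵥ g
    have hbtSg : bt = S *ᵥ g := by
      have hdet : IsUnit S.det := hS.det_pos.ne'.isUnit
      rw [hg, hA, Matrix.mulVec_mulVec, Matrix.mul_nonsing_inv S hdet, Matrix.one_mulVec]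
    have hbtval : ∀ j, bt j = S j i₀ * g i₀ := by
      intro j
      conv_lhs => rw [hbtSg, hgsingle]
      simp [Matrix.mulVec_single]
    -- so g i₀ = c
    have hgi₀ : g i₀ = c := by
      have := hbtval i₀
      rw [hbti₀, hdiag i₀, one_mul] at this
      exact this.symm
    -- pick j ≠ i₀
    haveI : Nontrivial (Fin k) := Fin.nontrivial_iff_two_le.mpr hk
    obtain ⟨j, hj⟩ := exists_ne i₀
    -- S j i₀ ≥ 1
    have hge : 1 ≤ S j i₀ := by
      have h1 := hbt_feas j
      rw [hbtval j, hgi₀] at h1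
      nlinarith
    -- but S j i₀ < 1 from positive definiteness
    have hlt : S j i₀ < 1 := by
      set x : Fin k → ℝ := Pi.single j 1 - Pi.single i₀ 1 with hx
      have hxne : x ≠ 0 := by
        intro hx0
        have := congrFun hx0 j
        rw [hx] at this
        simp [Pi.single_eq_of_ne hj] at this
      have hpos := hS.dotProduct_mulVec_pos hxne
      have hsymm : S i₀ j = S j i₀ := by
        have := hS.1
        have h2 := congrFun (congrFun this j) i₀
        simpa [Matrix.conjTranspose_apply] using h2
      have hcalc : star x ⬝ᵥ S *ᵥ x = 2 - 2 * S j i₀ := by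
        simp only [hx, star_trivial]
        simp only [Matrix.mulVec_sub, Matrix.mulVec_single_one, Matrix.col_apply, mul_one, sub_dotProduct,
          dotProduct_sub, single_dotProduct, one_mul]
        rw [hdiag j, hdiag i₀, hsymm]
        ring
      rw [hcalc] at hpos
      linarith
    linarith
end

section
/- Let Σ = ρ·11ᵀ + (1-ρ)E be the equicorrelation matrix with ρ ∈ (-1/(k-1),1), and the all-ones constraint vector. Since Σ⁻¹1 > 0, the unique solution of min{xᵀΣ⁻¹x : x ≥ 1} is the all-ones vector 1, with minimal index set I = {1,…,k}. -/
open Matrix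

lemma equi_inv_aux {k : ℕ} (ρ c : ℝ) (hc : c = 1 + ((k:ℝ)-1)*ρ)
    (h1ρ : (0:ℝ) < 1 - ρ) (hcpos : 0 < c) :
    (ρ • (Matrix.of fun _ _ => (1 : ℝ)) + (1 - ρ) • (1 : Matrix (Fin k) (Fin k) ℝ)) *
      ((1/(1-ρ)) • ((1 : Matrix (Fin k) (Fin k) ℝ) - (ρ/c) • (Matrix.of fun _ _ => (1:ℝ)))) = 1 := by
  set J : Matrix (Fin k) (Fin k) ℝ := Matrix.of fun _ _ => (1:ℝ) with hJ
  have hJJ : J * J = (k : ℝ) • J := by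
    ext i j
    simp [hJ, Matrix.mul_apply, Matrix.smul_apply]
  have hSJ : (ρ • J + (1 - ρ) • (1 : Matrix (Fin k) (Fin k) ℝ)) * J = c • J := by
    rw [add_mul, smul_mul_assoc, smul_mul_assoc, hJJ, one_mul, smul_smul, hc]
    rw [← add_smul]; ring_nf
  rw [Matrix.mul_smul, mul_sub, mul_one, Matrix.mul_smul, hSJ, smul_smul,
    div_mul_cancel₀ _ hcpos.ne']
  have : (ρ • J + (1 - ρ) • (1 : Matrix (Fin k) (Fin k) ℝ)) - ρ • J
      = (1-ρ) • (1 : Matrix (Fin k) (Fin k) ℝ) := by abel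
  rw [this, smul_smul, one_div, inv_mul_cancel₀ h1ρ.ne', one_smul]

lemma equi_quad_aux {k : ℕ} (ρ c : ℝ) (x : Fin k → ℝ) :
    x ⬝ᵥ ((1/(1-ρ)) • ((1 : Matrix (Fin k) (Fin k) ℝ) - (ρ/c) • (Matrix.of fun _ _ => (1:ℝ)))) *ᵥ x
      = (1/(1-ρ)) * ((∑ i, x i^2) - (ρ/c) * (∑ i, x i)^2) := by
  simp [dotProduct, Matrix.mulVec, Matrix.smul_apply, Matrix.sub_apply, Matrix.one_apply,
    Finset.mul_sum, Finset.sum_mul, mul_sub, sub_mul, Finset.sum_sub_distrib, sq,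
    Finset.sum_ite_eq, mul_comm, mul_assoc, mul_left_comm]

lemma equi_key_aux {k : ℕ} (ρ : ℝ) (hρ2 : ρ < 1)
    (hk1pos : (0:ℝ) < (k:ℝ) - 1) (hcpos : 0 < 1 + ((k:ℝ)-1)*ρ)
    (x : Fin k → ℝ) (hx : ∀ i, (1 : ℝ) ≤ x i) :
    (k:ℝ) * (1 - ρ) ≤ (1 + ((k:ℝ)-1)*ρ) * (∑ i, x i ^ 2) - ρ * (∑ i, x i) ^ 2 ∧
    ((1 + ((k:ℝ)-1)*ρ) * (∑ i, x i ^ 2) - ρ * (∑ i, x i) ^ 2 = (k:ℝ) * (1 - ρ) →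
      x = fun _ => (1:ℝ)) := by
  have hkpos : (0:ℝ) < (k:ℝ) := by linarith
  have h1ρ : (0:ℝ) < 1 - ρ := by linarith
  set c : ℝ := 1 + ((k:ℝ)-1)*ρ with hc
  set s := ∑ i, x i with hs
  set q := ∑ i, x i ^ 2 with hq
  have hsk : (k:ℝ) ≤ s := by
    calc (k:ℝ) = ∑ _i : Fin k, (1:ℝ) := by simp
      _ ≤ s := Finset.sum_le_sum fun i _ => hx i
  have hqk : (k:ℝ) ≤ q := by
    calc (k:ℝ) = ∑ _i : Fin k, (1:ℝ) := by simp
      _ ≤ q := Finset.sum_le_sum fun i _ => by nlinarith [hx i]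
  have hcs : s ^ 2 ≤ (k:ℝ) * q := by
    have h2 := sq_sum_le_card_mul_sum_sq (s := (Finset.univ : Finset (Fin k))) (f := x)
    simpa [hs, hq] using h2
  constructor
  · rcases le_or_gt 0 ρ with hρ0 | hρ0
    · nlinarith [mul_le_mul_of_nonneg_left hcs hcpos.le, sq_nonneg (s - (k:ℝ))]
    · have hA : c*(k:ℝ) ≤ c*q := mul_le_mul_of_nonneg_left hqk hcpos.le
      have hB : (k:ℝ)^2 ≤ s^2 := by nlinarith
      nlinarith [mul_nonneg (neg_nonneg.mpr hρ0.le) (sub_nonneg.mpr hB)]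
  · intro heq
    rcases le_or_gt 0 ρ with hρ0 | hρ0
    · -- from equality derive s = k
      have hsle : s ≤ (k:ℝ) := by
        by_contra h
        push_neg at h
        have hA : c*s^2 ≤ c*((k:ℝ)*q) := mul_le_mul_of_nonneg_left hcs hcpos.le
        have hB : (k:ℝ)^2 < s^2 := by nlinarith
        nlinarith [mul_pos h1ρ (sub_pos.mpr hB)]
      have hseq : s = (k:ℝ) := le_antisymm hsle hsk
      have hzero : ∑ i, (x i - 1) = 0 := by
        rw [Finset.sum_sub_distrib]
        simp [← hs, hseq]
      funext i
      have := (Finset.sum_eq_zero_iff_of_nonneg (fun j _ => by linarith [hx j])).mp hzero i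
        (Finset.mem_univ i)
      linarith [this]
    · have hqle : q ≤ (k:ℝ) := by
        by_contra h
        push_neg at h
        have hA : c*(k:ℝ) < c*q := by nlinarith
        have hB : (k:ℝ)^2 ≤ s^2 := by nlinarith
        nlinarith [mul_nonneg (neg_nonneg.mpr hρ0.le) (sub_nonneg.mpr hB)]
      have hqeq : q = (k:ℝ) := le_antisymm hqle hqk
      have hzero : ∑ i, (x i ^ 2 - 1) = 0 := by
        rw [Finset.sum_sub_distrib]
        simp [← hq, hqeq]
      funext i
      have h0 := (Finset.sum_eq_zero_iff_of_nonneg (fun j _ => by nlinarith [hx j])).mp hzero i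
        (Finset.mem_univ i)
      nlinarith [hx i]

/-- For the equicorrelation matrix `Σ` with `ρ ∈ (-1/(k-1),1)`, the all-ones vector is the
unique solution of `min xᵀΣ⁻¹x` over `{x : x ≥ 1}` (the minimal index set is `{1,…,k}`). -/
theorem equicorrelation_qp_solution_is_ones
    {k : ℕ} (hk : 2 ≤ k) (ρ : ℝ)
    (hρ1 : -1 / ((k : ℝ) - 1) < ρ) (hρ2 : ρ < 1)
    (S : Matrix (Fin k) (Fin k) ℝ)
    (hSdef : S = ρ • (Matrix.of fun _ _ => (1 : ℝ)) + (1 - ρ) • (1 : Matrix (Fin k) (Fin k) ℝ)) :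
    (∀ x : Fin k → ℝ, (∀ i, (1 : ℝ) ≤ x i) →
      (fun _ => (1 : ℝ)) ⬝ᵥ S⁻¹ *ᵥ (fun _ => (1 : ℝ)) ≤ x ⬝ᵥ S⁻¹ *ᵥ x) ∧
    (∀ x : Fin k → ℝ, (∀ i, (1 : ℝ) ≤ x i) →
      x ⬝ᵥ S⁻¹ *ᵥ x = (fun _ => (1 : ℝ)) ⬝ᵥ S⁻¹ *ᵥ (fun _ => (1 : ℝ)) →
      x = fun _ => (1 : ℝ)) := by
  have hk1 : (1:ℝ) ≤ (k:ℝ) - 1 := by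
    have : (2:ℝ) ≤ (k:ℝ) := by exact_mod_cast hk
    linarith
  have hk1pos : (0:ℝ) < (k:ℝ) - 1 := by linarith
  have hkpos : (0:ℝ) < (k:ℝ) := by linarith
  set c : ℝ := 1 + ((k:ℝ)-1)*ρ with hc
  have h1ρ : (0:ℝ) < 1 - ρ := by linarith
  have hcpos : 0 < c := by
    have := (div_lt_iff₀ hk1pos).mp hρ1
    nlinarith
  set T : Matrix (Fin k) (Fin k) ℝ :=
    (1/(1-ρ)) • ((1 : Matrix (Fin k) (Fin k) ℝ) - (ρ/c) • (Matrix.of fun _ _ => (1:ℝ))) with hT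
  have hinv : S⁻¹ = T := by
    apply Matrix.inv_eq_right_inv
    rw [hSdef]
    exact equi_inv_aux ρ c hc h1ρ hcpos
  have key : ∀ x : Fin k → ℝ, (∀ i, (1 : ℝ) ≤ x i) →
      (k:ℝ) * (1 - ρ) ≤ c * (∑ i, x i ^ 2) - ρ * (∑ i, x i) ^ 2 ∧
      (c * (∑ i, x i ^ 2) - ρ * (∑ i, x i) ^ 2 = (k:ℝ) * (1 - ρ) → x = fun _ => (1:ℝ)) := by
    rw [hc]
    exact fun x hx => equi_key_aux ρ hρ2 hk1pos (hc ▸ hcpos) x hx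
  -- value at the all-ones vector
  have hones : ((fun _ => (1 : ℝ)) ⬝ᵥ S⁻¹ *ᵥ (fun _ => (1 : ℝ)))
      = (1/(1-ρ)) * ((k:ℝ) - (ρ/c) * (k:ℝ)^2) := by
    rw [hinv, hT, equi_quad_aux]
    simp
  have hquad : ∀ x : Fin k → ℝ, x ⬝ᵥ S⁻¹ *ᵥ x
      = (1/(1-ρ)) * ((∑ i, x i^2) - (ρ/c) * (∑ i, x i)^2) := by
    intro x
    rw [hinv, hT, equi_quad_aux]
  have hcmp : ∀ x : Fin k → ℝ,
      x ⬝ᵥ S⁻¹ *ᵥ x - ((fun _ => (1 : ℝ)) ⬝ᵥ S⁻¹ *ᵥ (fun _ => (1 : ℝ)))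
      = (1/((1-ρ)*c)) * ((c * (∑ i, x i ^ 2) - ρ * (∑ i, x i) ^ 2) - (k:ℝ) * (1-ρ)) := by
    intro x
    rw [hquad, hones, hc]
    have hc0 : (1 + ((k:ℝ)-1)*ρ) ≠ 0 := hcpos.ne'
    have hr0 : (1 - ρ) ≠ 0 := h1ρ.ne'
    generalize (∑ i, x i ^ 2) = A
    generalize (∑ i, x i) = B
    have hc2 : (1 + ρ * ((k:ℝ)-1)) ≠ 0 := by rw [mul_comm]; exact hc0
    field_simp
    ring
  have hfpos : (0:ℝ) < 1/((1-ρ)*c) := one_div_pos.mpr (mul_pos h1ρ hcpos)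
  constructor
  · intro x hx
    have h1 := (key x hx).1
    have h2 := hcmp x
    have hnn : 0 ≤ x ⬝ᵥ S⁻¹ *ᵥ x - ((fun _ => (1:ℝ)) ⬝ᵥ S⁻¹ *ᵥ fun _ => (1:ℝ)) := by
      rw [h2]
      exact mul_nonneg hfpos.le (sub_nonneg.mpr h1)
    linarith
  · intro x hx heq
    apply (key x hx).2
    have h2 := hcmp x
    rw [heq, sub_self] at h2
    have h3 := (mul_eq_zero.mp h2.symm).resolve_left hfpos.ne'
    linarith
end

section
/- Let B = C ᵀC be a positive definite k×k matrix with C its lower-triangular Cholesky factor, and suppose B = E/(1-ρ) - ρ·11ᵀ/((1-ρ)(1+(k-1)ρ)) is the inverse of an equicorrelation matrix with ρ ∈ (-1/(k-1),1). Then in each row i of C the off-diagonal entries to the left of the diagonal are all equal: c_{i1} = c_{i2} = … = c_{i,i-1}, and c_{ii} + (i-1)c_{i1} > 0 for every i. -/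
open Matrix

/-- For the Cholesky factor `C` (lower triangular with positive diagonal, `CᵀC = B`) of the
inverse `B` of an equicorrelation matrix, in each row the entries to the left of the
diagonal are all equal, and `c_{ii} + (i-1) c_{i1} > 0` for every row `i`. -/
theorem cholesky_equicorrelation_inverse_rows
    {k : ℕ} (hk : 2 ≤ k) (ρ : ℝ)
    (hρ1 : -1 / ((k : ℝ) - 1) < ρ) (hρ2 : ρ < 1)
    (B : Matrix (Fin k) (Fin k) ℝ)
    (hBdef : B = (1 - ρ)⁻¹ • (1 : Matrix (Fin k) (Fin k) ℝ) -
      (ρ / ((1 - ρ) * (1 + ((k : ℝ) - 1) * ρ))) • (Matrix.of fun _ _ => (1 : ℝ)))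
    (C : Matrix (Fin k) (Fin k) ℝ)
    (hlow : ∀ i j : Fin k, i < j → C i j = 0)
    (hdiagpos : ∀ i, 0 < C i i)
    (hchol : Cᵀ * C = B) :
    (∀ i j j' : Fin k, j < i → j' < i → C i j = C i j') ∧
    (∀ i : Fin k, 0 < C i i + (i : ℕ) * C i ⟨0, by omega⟩) := by
  have hk1 : (1:ℝ) ≤ (k:ℝ) - 1 := by
    have h2 : (2:ℝ) ≤ (k:ℝ) := by exact_mod_cast hk
    linarith
  have h1ρ : 0 < 1 - ρ := by linarith
  have hk0 : (0:ℝ) < (k:ℝ) - 1 := by linarith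
  have hkρ : 0 < 1 + ((k:ℝ) - 1) * ρ := by
    rw [div_lt_iff₀ hk0] at hρ1
    nlinarith
  set a : ℝ := (1 - ρ)⁻¹ with ha_def
  set c : ℝ := ρ / ((1 - ρ) * (1 + ((k:ℝ) - 1) * ρ)) with hc_def
  have hapos : 0 < a := inv_pos.mpr h1ρ
  have hB : ∀ i j : Fin k, B i j = (if i = j then a else 0) - c := by
    intro i j
    rw [hBdef]
    by_cases h : i = j <;>
      simp [Matrix.sub_apply, Matrix.smul_apply, Matrix.one_apply, Matrix.of_apply, h]
  have hCC : ∀ i j : Fin k, (∑ m, C m i * C m j) = B i j := by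
    intro i j
    rw [← hchol]
    simp [Matrix.mul_apply, Matrix.transpose_apply]
  -- Claim 1: entries left of the diagonal in each row are equal
  have claim1 : ∀ n : ℕ, ∀ i : Fin k, k - (i:ℕ) ≤ n →
      ∀ j j' : Fin k, j < i → j' < i → C i j = C i j' := by
    intro n
    induction n with
    | zero =>
      intro i hi
      exfalso
      have := i.isLt
      omega
    | succ n ih =>
      intro i hi j j' hj hj'
      have hBji : B j i = B j' i := by
        rw [hB, hB, if_neg (Fin.ne_of_lt hj), if_neg (Fin.ne_of_lt hj')]
      have h1 : (∑ m, C m j * C m i) = ∑ m, C m j' * C m i := by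
        rw [hCC, hCC, hBji]
      have h2 : ∀ m : Fin k, m ∈ Finset.univ → m ≠ i →
          C m j * C m i - C m j' * C m i = 0 := by
        intro m _ hm
        rcases lt_or_gt_of_ne hm with h | h
        · rw [hlow m i h]; ring
        · have hkm : k - (m:ℕ) ≤ n := by
            have h1 : (i:ℕ) < (m:ℕ) := h
            have := m.isLt
            omega
          rw [ih m hkm j j' (lt_trans hj h) (lt_trans hj' h)]
          ring
      have h3 : (∑ m, (C m j * C m i - C m j' * C m i))
          = C i j * C i i - C i j' * C i i := by
        rw [Finset.sum_eq_single i h2 (fun h => absurd (Finset.mem_univ i) h)]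
      have h4 : C i j * C i i = C i j' * C i i := by
        have h5 : (∑ m, (C m j * C m i - C m j' * C m i)) = 0 := by
          rw [Finset.sum_sub_distrib, h1, sub_self]
        rw [h5] at h3
        linarith
      exact mul_right_cancel₀ (ne_of_gt (hdiagpos i)) h4
  have claim1' : ∀ i j j' : Fin k, j < i → j' < i → C i j = C i j' :=
    fun i j j' hj hj' => claim1 k i (by omega) j j' hj hj'
  refine ⟨claim1', ?_⟩
  set z : Fin k := ⟨0, by omega⟩ with hz_def
  set T : Fin k → ℝ := fun i => ∑ m ∈ Finset.Ioi i, C m z * C m z with hT_def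
  have hcol : ∀ w i : Fin k, w ≤ i → C i w * C i i + T i = B w i := by
    intro w i hwi
    rw [← hCC w i]
    have h1 : (∑ m ∈ Finset.Ici i, C m w * C m i) = ∑ m, C m w * C m i := by
      apply Finset.sum_subset (Finset.subset_univ _)
      intro m _ hm
      have hmi : m < i := by simpa using hm
      rw [hlow m i hmi, mul_zero]
    rw [← h1, ← Finset.Ioi_insert, Finset.sum_insert (by simp)]
    congr 1
    apply Finset.sum_congr rfl
    intro m hm
    have him : i < m := Finset.mem_Ioi.mp hm
    have hzm : z < m := by
      have h1 : (i:ℕ) < (m:ℕ) := him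
      exact Fin.lt_def.mpr (by simp [hz_def]; omega)
    have h3 : C m w = C m z := claim1' m w z (lt_of_le_of_lt hwi him) hzm
    have h4 : C m i = C m z := claim1' m i z him hzm
    rw [h3, h4]
  have F1 : ∀ i : Fin k, C i i * C i i + T i = a - c := by
    intro i
    rw [hcol i i le_rfl, hB, if_pos rfl]
  have F2 : ∀ i : Fin k, z < i → C i z * C i i + T i = -c := by
    intro i hzi
    rw [hcol z i (le_of_lt hzi), hB, if_neg (Fin.ne_of_lt hzi)]
    ring
  have F3 : ∀ i j : Fin k, (j:ℕ) + 1 = (i:ℕ) → T j = C i z * C i z + T i := by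
    intro i j hji
    have h1 : Finset.Ioi j = insert i (Finset.Ioi i) := by
      ext m
      simp only [Finset.mem_Ioi, Finset.mem_insert, Fin.lt_def, Fin.ext_iff]
      omega
    rw [hT_def]
    simp only [h1]
    rw [Finset.sum_insert (by simp)]
  -- key algebraic identity for the recursion
  have key : ∀ (x0 y0 x y Ti Ti' j : ℝ),
      x0 * x0 + Ti = a - c → y0 * x0 + Ti = -c → Ti = y * y + Ti' →
      x * x + Ti' = a - c → y * x + Ti' = -c →
      ((x0 + j * y0) * x0) * (x * x) = a * ((x + (j + 1) * y) * x) := by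
    intro x0 y0 x y Ti Ti' j hX hY hT hu hr
    linear_combination (x*x) * hX + j*(x*x) * hY - (1+j)*(x*x) * hT +
      (j+1)*x*y * hu - ((j+1)*(x*y + x*x)) * hr
  have main : ∀ n : ℕ, ∀ i : Fin k, (i:ℕ) + n = k - 1 →
      0 < (C i i + ((i:ℕ) : ℝ) * C i z) * C i i := by
    intro n
    induction n with
    | zero =>
      intro i hi
      have hzi : z < i := by
        rw [Fin.lt_def]
        simp [hz_def]
        omega
      have hT0 : T i = 0 := by
        apply Finset.sum_eq_zero
        intro m hm
        exfalso
        rw [Finset.mem_Ioi] at hm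
        have h1 : (i:ℕ) < (m:ℕ) := hm
        have := m.isLt
        omega
      have hX := F1 i
      have hY := F2 i hzi
      rw [hT0] at hX hY
      have hik : ((i:ℕ) : ℝ) = (k:ℝ) - 1 := by
        have : (i:ℕ) = k - 1 := by omega
        rw [this]
        push_cast [Nat.cast_sub (by omega : 1 ≤ k)]
        ring
      have hval : (C i i + ((i:ℕ) : ℝ) * C i z) * C i i = a - (k:ℝ) * c := by
        rw [hik]
        nlinarith [hX, hY]
      rw [hval]
      have hne1 : (1 - ρ) ≠ 0 := ne_of_gt h1ρ
      have hne2 : (1 + ((k:ℝ) - 1) * ρ) ≠ 0 := ne_of_gt hkρ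
      have hmul : (a - (k:ℝ) * c) * (1 + ((k:ℝ) - 1) * ρ) = 1 := by
        rw [ha_def, hc_def]
        field_simp
        have hne3 : (1 + ρ * ((k:ℝ) - 1)) ≠ 0 := by rw [mul_comm]; exact hne2
        field_simp
        ring
      nlinarith [hmul, hkρ]
    | succ n ih =>
      intro i hi
      rcases Nat.eq_zero_or_pos (i:ℕ) with h0 | hpos
      · have h0' : ((i:ℕ) : ℝ) = 0 := by rw [h0]; simp
        rw [h0']
        have := hdiagpos i
        nlinarith
      · set i' : Fin k := ⟨(i:ℕ) + 1, by omega⟩ with hi'_def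
        have hii' : (i':ℕ) = (i:ℕ) + 1 := rfl
        have hq' : 0 < (C i' i' + ((i':ℕ) : ℝ) * C i' z) * C i' i' :=
          ih i' (by omega)
        have hzi : z < i := by
          rw [Fin.lt_def]
          simp [hz_def]
          omega
        have hzi' : z < i' := by
          rw [Fin.lt_def]
          simp [hz_def, hi'_def]
        have hid := key (C i i) (C i z) (C i' i') (C i' z) (T i) (T i')
          ((i:ℕ) : ℝ) (F1 i) (F2 i hzi) (F3 i' i rfl) (F1 i') (F2 i' hzi')
        have hcast : (((i:ℕ) : ℝ) + 1) = ((i':ℕ) : ℝ) := by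
          rw [hii']
          push_cast
          ring
        rw [hcast] at hid
        have hxx : 0 < C i' i' * C i' i' := mul_pos (hdiagpos i') (hdiagpos i')
        nlinarith [mul_pos hapos hq', hid, hxx]
  intro i
  have hq := main (k - 1 - (i:ℕ)) i (by have := i.isLt; omega)
  have := hdiagpos i
  nlinarith
end

section
/- Let α₁, α₂ > 0 and let g: (0,∞) → (0,∞) be measurable with (Γ(α₁)Γ(α₂)/Γ(α₁+α₂))·∫₀^∞ g(x)x^{α₁+α₂-1}dx = 1. Then the function h(x₁,x₂) = g(x₁²+x₂²)·|x₁|^{2α₁-1}|x₂|^{2α₂-1} is a probability density on ℝ². -/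
open MeasureTheory Real Set

-- beta integrand integrability
lemma beta_integrableOn {a b : ℝ} (ha : 0 < a) (hb : 0 < b) :
    IntegrableOn (fun t : ℝ => t ^ (a - 1) * (1 - t) ^ (b - 1)) (Set.Ioo (0:ℝ) 1) := by
  have hc : IntervalIntegrable (fun x : ℝ => (x:ℂ) ^ ((a:ℂ) - 1) * ((1:ℂ) - x) ^ ((b:ℂ) - 1))
      volume 0 1 := Complex.betaIntegral_convergent (by simpa using ha) (by simpa using hb)
  have hIoc : IntegrableOn (fun x : ℝ => (x:ℂ) ^ ((a:ℂ) - 1) * ((1:ℂ) - x) ^ ((b:ℂ) - 1))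
      (Set.Ioc 0 1) := (intervalIntegrable_iff_integrableOn_Ioc_of_le zero_le_one).mp hc
  have hre : IntegrableOn (fun x : ℝ => ((x:ℂ) ^ ((a:ℂ) - 1) * ((1:ℂ) - x) ^ ((b:ℂ) - 1)).re)
      (Set.Ioo (0:ℝ) 1) := (hIoc.mono_set Set.Ioo_subset_Ioc_self).re
  refine hre.congr_fun (fun x hx => ?_) measurableSet_Ioo
  have h1 : ((x:ℂ) ^ ((a:ℂ) - 1) * ((1:ℂ) - x) ^ ((b:ℂ) - 1))
      = ((x ^ (a-1) * (1-x) ^ (b-1) : ℝ) : ℂ) := by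
    rw [Complex.ofReal_mul, Complex.ofReal_cpow hx.1.le, Complex.ofReal_cpow (by linarith [hx.2])]
    push_cast
    ring
  simp [h1]

lemma beta_value {a b : ℝ} (ha : 0 < a) (hb : 0 < b) :
    Real.Gamma a * Real.Gamma b
      = Real.Gamma (a + b) * ∫ t in Set.Ioo (0:ℝ) 1, t ^ (a-1) * (1-t) ^ (b-1) := by
  have h := Complex.Gamma_mul_Gamma_eq_betaIntegral (s := (a:ℂ)) (t := (b:ℂ))
    (by simpa using ha) (by simpa using hb)
  have hbeta : Complex.betaIntegral a b
      = ((∫ t in Set.Ioo (0:ℝ) 1, t ^ (a-1) * (1-t) ^ (b-1) : ℝ) : ℂ) := by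
    rw [show (∫ t in Set.Ioo (0:ℝ) 1, t ^ (a-1) * (1-t)^(b-1))
        = ∫ t in (0:ℝ)..1, t ^ (a-1) * (1-t)^(b-1) by
      rw [intervalIntegral.integral_of_le zero_le_one, integral_Ioc_eq_integral_Ioo]]
    rw [← intervalIntegral.integral_ofReal, Complex.betaIntegral]
    refine intervalIntegral.integral_congr fun x hx => ?_
    rw [Set.uIcc_of_le zero_le_one] at hx
    rw [Complex.ofReal_mul, Complex.ofReal_cpow hx.1, Complex.ofReal_cpow (by linarith [hx.2])]
    push_cast
    ring
  rw [hbeta, show ((a:ℂ) + b) = ((a+b:ℝ):ℂ) by push_cast; ring, Complex.Gamma_ofReal,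
    Complex.Gamma_ofReal, Complex.Gamma_ofReal, ← Complex.ofReal_mul, ← Complex.ofReal_mul] at h
  exact_mod_cast h
lemma sq_image_Ioi : (fun r : ℝ => r ^ 2) '' Set.Ioi 0 = Set.Ioi 0 := by
  ext x
  constructor
  · rintro ⟨r, hr, rfl⟩
    exact pow_pos (show (0:ℝ) < r from hr) 2
  · intro hx
    exact ⟨Real.sqrt x, Real.sqrt_pos.2 hx, Real.sq_sqrt (le_of_lt hx)⟩

lemma sq_injOn_Ioi : Set.InjOn (fun r : ℝ => r ^ 2) (Set.Ioi 0) := by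
  intro x hx y hy hxy
  simp only [Set.mem_Ioi] at hx hy
  dsimp only at hxy
  nlinarith

lemma sinsq_image : (fun θ : ℝ => Real.sin θ ^ 2) '' Set.Ioo 0 (π/2) = Set.Ioo 0 1 := by
  have hπ := Real.pi_pos
  ext x
  constructor
  · rintro ⟨θ, hθ, rfl⟩
    obtain ⟨h1, h2⟩ := hθ
    have hs : 0 < Real.sin θ := Real.sin_pos_of_pos_of_lt_pi h1 (by linarith)
    have hs1 : Real.sin θ < 1 := by
      have := Real.strictMonoOn_sin (a := θ) (b := π/2)
        ⟨by linarith, by linarith⟩ ⟨by linarith, le_refl _⟩ h2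
      simpa using this
    constructor
    · positivity
    · dsimp only; nlinarith
  · intro hx
    have hsx : Real.sqrt x ≤ 1 := by
      rw [show (1:ℝ) = Real.sqrt 1 by simp]
      exact Real.sqrt_le_sqrt hx.2.le
    have hsx' : Real.sqrt x < 1 := by
      rw [show (1:ℝ) = Real.sqrt 1 by simp]
      exact Real.sqrt_lt_sqrt hx.1.le hx.2
    refine ⟨Real.arcsin (Real.sqrt x), ⟨?_, ?_⟩, ?_⟩
    · exact Real.arcsin_pos.2 (Real.sqrt_pos.2 hx.1)
    · exact Real.arcsin_lt_pi_div_two.2 hsx'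
    · dsimp only
      rw [Real.sin_arcsin (by linarith [Real.sqrt_nonneg x]) hsx]
      exact Real.sq_sqrt hx.1.le

lemma sinsq_injOn : Set.InjOn (fun θ : ℝ => Real.sin θ ^ 2) (Set.Ioo 0 (π/2)) := by
  intro x hx y hy hxy
  have hπ := Real.pi_pos
  have hsx : 0 < Real.sin x := Real.sin_pos_of_pos_of_lt_pi hx.1 (by linarith [hx.2])
  have hsy : 0 < Real.sin y := Real.sin_pos_of_pos_of_lt_pi hy.1 (by linarith [hy.2])
  dsimp only at hxy
  have h : Real.sin x = Real.sin y := by nlinarith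
  exact Real.injOn_sin ⟨by linarith [hx.1], by linarith [hx.2]⟩
    ⟨by linarith [hy.1], by linarith [hy.2]⟩ h

lemma refl_image (c u v : ℝ) : (fun x : ℝ => c - x) '' Set.Ioo u v = Set.Ioo (c - v) (c - u) := by
  ext y
  constructor
  · rintro ⟨x, hx, rfl⟩
    simp only [Set.mem_Ioo] at hx ⊢
    constructor <;> linarith [hx.1, hx.2]
  · intro hy
    exact ⟨c - y, ⟨by linarith [hy.2], by linarith [hy.1]⟩, by ring⟩

lemma neg_image (u v : ℝ) : (fun x : ℝ => -x) '' Set.Ioo u v = Set.Ioo (-v) (-u) := by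
  ext y
  constructor
  · rintro ⟨x, hx, rfl⟩
    simp only [Set.mem_Ioo] at hx ⊢
    constructor <;> linarith [hx.1, hx.2]
  · intro hy
    exact ⟨-y, ⟨by linarith [hy.2], by linarith [hy.1]⟩, by ring⟩
lemma angular {a b : ℝ} (ha : 0 < a) (hb : 0 < b) :
    ∫ θ in Set.Ioo (-π) π, |Real.cos θ| ^ (2*a-1) * |Real.sin θ| ^ (2*b-1)
      = 2 * ∫ t in Set.Ioo (0:ℝ) 1, t ^ (b-1) * (1-t) ^ (a-1) := by
  have hπ := Real.pi_pos
  set W : ℝ → ℝ := fun θ => |Real.cos θ| ^ (2*a-1) * |Real.sin θ| ^ (2*b-1) with hW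
  set T : ℝ := ∫ θ in Set.Ioo 0 (π/2), W θ with hT
  have hderiv : ∀ x ∈ Set.Ioo (0:ℝ) (π/2), HasDerivWithinAt (fun θ : ℝ => Real.sin θ ^ 2)
      (2 * Real.sin x * Real.cos x) (Set.Ioo (0:ℝ) (π/2)) x := by
    intro x _
    have := ((Real.hasDerivAt_sin x).fun_pow 2).hasDerivWithinAt
      (s := Set.Ioo (0:ℝ) (π/2))
    simpa [mul_comm, mul_assoc] using this
  -- pointwise identity on the first quadrant
  have hpt : ∀ θ ∈ Set.Ioo (0:ℝ) (π/2),
      |2 * Real.sin θ * Real.cos θ| • ((Real.sin θ ^ 2) ^ (b-1) * (1 - Real.sin θ ^ 2) ^ (a-1))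
        = 2 * W θ := by
    intro θ hθ
    have hs : 0 < Real.sin θ := Real.sin_pos_of_pos_of_lt_pi hθ.1 (by linarith [hθ.2])
    have hc : 0 < Real.cos θ := Real.cos_pos_of_mem_Ioo ⟨by linarith [hθ.1], hθ.2⟩
    have e1 : (Real.sin θ ^ 2) ^ (b-1) = Real.sin θ ^ (2*b-2) := by
      rw [← Real.rpow_natCast (Real.sin θ) 2, ← Real.rpow_mul hs.le,
        show ((2:ℕ):ℝ) * (b-1) = 2*b-2 by push_cast; ring]
    have e2 : (1 - Real.sin θ ^ 2) ^ (a-1) = Real.cos θ ^ (2*a-2) := by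
      rw [← Real.cos_sq', ← Real.rpow_natCast (Real.cos θ) 2, ← Real.rpow_mul hc.le,
        show ((2:ℕ):ℝ) * (a-1) = 2*a-2 by push_cast; ring]
    have e3 : Real.sin θ * Real.sin θ ^ (2*b-2) = Real.sin θ ^ (2*b-1) := by
      rw [show (2*b-1 : ℝ) = 1 + (2*b-2) by ring, Real.rpow_add hs, Real.rpow_one]
    have e4 : Real.cos θ * Real.cos θ ^ (2*a-2) = Real.cos θ ^ (2*a-1) := by
      rw [show (2*a-1 : ℝ) = 1 + (2*a-2) by ring, Real.rpow_add hc, Real.rpow_one]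
    rw [smul_eq_mul, abs_of_pos (by positivity), e1, e2, hW]
    dsimp only
    rw [abs_of_pos hs, abs_of_pos hc]
    linear_combination 2 * (Real.cos θ * Real.cos θ ^ (2*a-2)) * e3
      + 2 * Real.sin θ ^ (2*b-1) * e4
  -- substitution t = sin² θ
  have hsub : (∫ t in Set.Ioo (0:ℝ) 1, t ^ (b-1) * (1-t) ^ (a-1)) = 2 * T := by
    rw [← sinsq_image,
      integral_image_eq_integral_abs_deriv_smul measurableSet_Ioo hderiv sinsq_injOn
        (fun t => t ^ (b-1) * (1-t) ^ (a-1)),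
      setIntegral_congr_fun measurableSet_Ioo (fun θ hθ => hpt θ hθ), integral_const_mul]
  have hWint : IntegrableOn W (Set.Ioo 0 (π/2)) := by
    have h0 : IntegrableOn (fun t : ℝ => t ^ (b-1) * (1-t) ^ (a-1)) (Set.Ioo (0:ℝ) 1) :=
      beta_integrableOn hb ha
    rw [← sinsq_image,
      integrableOn_image_iff_integrableOn_abs_deriv_smul measurableSet_Ioo hderiv sinsq_injOn] at h0
    have h1 : IntegrableOn (fun θ => 2 * W θ) (Set.Ioo 0 (π/2)) :=
      h0.congr_fun (fun θ hθ => hpt θ hθ) measurableSet_Ioo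
    exact (integrable_const_mul_iff (isUnit_iff_ne_zero.2 two_ne_zero) W).mp h1
  -- reflection θ ↦ π - θ
  have himg2 : (fun x : ℝ => π - x) '' Set.Ioo 0 (π/2) = Set.Ioo (π/2) π := by
    rw [refl_image, show π - π/2 = π/2 by ring, sub_zero]
  have hderiv2 : ∀ x ∈ Set.Ioo (0:ℝ) (π/2), HasDerivWithinAt (fun x : ℝ => π - x)
      (-1) (Set.Ioo (0:ℝ) (π/2)) x := fun x _ =>
    ((hasDerivAt_id x).const_sub π).hasDerivWithinAt
  have hinj2 : Set.InjOn (fun x : ℝ => π - x) (Set.Ioo 0 (π/2)) := by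
    intro x _ y _ h; dsimp only at h; linarith
  have hWrefl : ∀ θ : ℝ, W (π - θ) = W θ := by
    intro θ; rw [hW]; dsimp only
    rw [Real.cos_pi_sub, Real.sin_pi_sub, abs_neg]
  have hQ2 : (∫ θ in Set.Ioo (π/2) π, W θ) = T := by
    rw [← himg2, integral_image_eq_integral_abs_deriv_smul measurableSet_Ioo hderiv2 hinj2 W]
    rw [hT]
    refine setIntegral_congr_fun measurableSet_Ioo (fun θ _ => ?_)
    rw [smul_eq_mul, hWrefl]; norm_num
  have hQ2int : IntegrableOn W (Set.Ioo (π/2) π) := by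
    rw [← himg2, integrableOn_image_iff_integrableOn_abs_deriv_smul measurableSet_Ioo hderiv2 hinj2]
    refine hWint.congr_fun (fun θ _ => ?_) measurableSet_Ioo
    rw [smul_eq_mul, hWrefl]; norm_num
  -- half circle
  have hu : Set.Ioo (0:ℝ) (π/2) ∪ Set.Ico (π/2) π = Set.Ioo 0 π :=
    Set.Ioo_union_Ico_eq_Ioo (by linarith) (by linarith)
  have hdisj : Disjoint (Set.Ioo (0:ℝ) (π/2)) (Set.Ico (π/2) π) :=
    Set.disjoint_left.2 fun x h1 h2 => absurd h1.2 (not_lt.2 h2.1)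
  have hQ2int' : IntegrableOn W (Set.Ico (π/2) π) :=
    hQ2int.congr_set_ae Ioo_ae_eq_Ico.symm
  have hIoo0π : (∫ θ in Set.Ioo 0 π, W θ) = 2 * T := by
    rw [← hu, setIntegral_union hdisj measurableSet_Ico hWint hQ2int',
      integral_Ico_eq_integral_Ioo, hQ2]
    ring
  have hIoo0πint : IntegrableOn W (Set.Ioo 0 π) := by
    rw [← hu]; exact hWint.union hQ2int'
  -- reflection θ ↦ -θ
  have himg3 : (fun x : ℝ => -x) '' Set.Ioo 0 π = Set.Ioo (-π) 0 := by
    rw [neg_image]; norm_num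
  have hderiv3 : ∀ x ∈ Set.Ioo (0:ℝ) π, HasDerivWithinAt (fun x : ℝ => -x)
      (-1) (Set.Ioo (0:ℝ) π) x := fun x _ => (hasDerivAt_neg x).hasDerivWithinAt
  have hinj3 : Set.InjOn (fun x : ℝ => -x) (Set.Ioo 0 π) := by
    intro x _ y _ h; dsimp only at h; linarith
  have hWneg : ∀ θ : ℝ, W (-θ) = W θ := by
    intro θ; rw [hW]; dsimp only
    rw [Real.cos_neg, Real.sin_neg, abs_neg]
  have hQ3 : (∫ θ in Set.Ioo (-π) 0, W θ) = 2 * T := by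
    rw [← himg3, integral_image_eq_integral_abs_deriv_smul measurableSet_Ioo hderiv3 hinj3 W,
      ← hIoo0π]
    refine setIntegral_congr_fun measurableSet_Ioo (fun θ _ => ?_)
    rw [smul_eq_mul, hWneg]; norm_num
  have hQ3int : IntegrableOn W (Set.Ioo (-π) 0) := by
    rw [← himg3, integrableOn_image_iff_integrableOn_abs_deriv_smul measurableSet_Ioo hderiv3 hinj3]
    refine hIoo0πint.congr_fun (fun θ _ => ?_) measurableSet_Ioo
    rw [smul_eq_mul, hWneg]; norm_num
  -- full circle
  have hu2 : Set.Ioo (-π) 0 ∪ Set.Ico 0 π = Set.Ioo (-π) π :=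
    Set.Ioo_union_Ico_eq_Ioo (by linarith) (by linarith)
  have hdisj2 : Disjoint (Set.Ioo (-π) (0:ℝ)) (Set.Ico 0 π) :=
    Set.disjoint_left.2 fun x h1 h2 => absurd h1.2 (not_lt.2 h2.1)
  have hIoo0πint' : IntegrableOn W (Set.Ico 0 π) :=
    hIoo0πint.congr_set_ae Ioo_ae_eq_Ico.symm
  rw [← hu2, setIntegral_union hdisj2 measurableSet_Ico hQ3int hIoo0πint',
    integral_Ico_eq_integral_Ioo, hQ3, hIoo0π, hsub]
  ring

/-- If `g` is a nonnegative density generator normalized so that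
`(Γ(α₁)Γ(α₂)/Γ(α₁+α₂)) ∫₀^∞ g(x) x^{α₁+α₂-1} dx = 1`, then
`h(x₁,x₂) = g(x₁²+x₂²)|x₁|^{2α₁-1}|x₂|^{2α₂-1}` is a probability density on `ℝ²`. -/
theorem dirichlet_density_generator_normalization
    (α₁ α₂ : ℝ) (hα₁ : 0 < α₁) (hα₂ : 0 < α₂)
    (g : ℝ → ℝ) (hg_meas : Measurable g)
    (hg_nonneg : ∀ x, 0 ≤ g x) (hg_pos : ∀ x > (0:ℝ), 0 < g x)
    (hnorm : (Real.Gamma α₁ * Real.Gamma α₂ / Real.Gamma (α₁ + α₂)) *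
      ∫ x in Set.Ioi (0:ℝ), g x * x ^ (α₁ + α₂ - 1) = 1) :
    (∀ p : ℝ × ℝ, 0 ≤ g (p.1 ^ 2 + p.2 ^ 2) * |p.1| ^ (2 * α₁ - 1) * |p.2| ^ (2 * α₂ - 1)) ∧
    ∫ p : ℝ × ℝ, g (p.1 ^ 2 + p.2 ^ 2) * |p.1| ^ (2 * α₁ - 1) * |p.2| ^ (2 * α₂ - 1) = 1 := by
  have hπ := Real.pi_pos
  refine ⟨fun p => mul_nonneg (mul_nonneg (hg_nonneg _) (Real.rpow_nonneg (abs_nonneg _) _))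
    (Real.rpow_nonneg (abs_nonneg _) _), ?_⟩
  have hG : (0:ℝ) < Real.Gamma (α₁ + α₂) := Real.Gamma_pos_of_pos (by linarith)
  -- radial change of variables
  have hrad : (∫ x in Set.Ioi (0:ℝ), g x * x ^ (α₁ + α₂ - 1))
      = 2 * ∫ r in Set.Ioi (0:ℝ), g (r ^ 2) * r ^ (2*(α₁+α₂)-1) := by
    have hderiv : ∀ x ∈ Set.Ioi (0:ℝ), HasDerivWithinAt (fun r : ℝ => r ^ 2)
        (2 * x) (Set.Ioi (0:ℝ)) x := by
      intro x _
      simpa using (hasDerivAt_pow 2 x).hasDerivWithinAt (s := Set.Ioi (0:ℝ))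
    conv_lhs => rw [← sq_image_Ioi]
    rw [integral_image_eq_integral_abs_deriv_smul measurableSet_Ioi hderiv
      sq_injOn_Ioi (fun x => g x * x ^ (α₁ + α₂ - 1))]
    have hcongr : ∫ r in Set.Ioi (0:ℝ), |2 * r| • (g (r ^ 2) * (r ^ 2) ^ (α₁ + α₂ - 1))
        = ∫ r in Set.Ioi (0:ℝ), 2 * (g (r ^ 2) * r ^ (2*(α₁+α₂)-1)) := by
      refine setIntegral_congr_fun measurableSet_Ioi (fun r hr => ?_)
      have hr' : (0:ℝ) < r := hr
      have e1 : ((r:ℝ) ^ 2) ^ (α₁ + α₂ - 1) = r ^ (2*(α₁+α₂)-2) := by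
        rw [← Real.rpow_natCast r 2, ← Real.rpow_mul hr'.le,
          show ((2:ℕ):ℝ) * (α₁ + α₂ - 1) = 2*(α₁+α₂)-2 by push_cast; ring]
      have e2 : r * r ^ (2*(α₁+α₂)-2) = r ^ (2*(α₁+α₂)-1) := by
        rw [show (2*(α₁+α₂)-1 : ℝ) = 1 + (2*(α₁+α₂)-2) by ring, Real.rpow_add hr', Real.rpow_one]
      rw [smul_eq_mul, abs_of_pos (by positivity), e1]
      linear_combination 2 * g (r ^ 2) * e2
    rw [hcongr, integral_const_mul]
  -- polar coordinates
  rw [← integral_comp_polarCoord_symm]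
  have htarget : polarCoord.target = Set.Ioi (0:ℝ) ×ˢ Set.Ioo (-π) π := rfl
  rw [htarget, setIntegral_congr_fun (measurableSet_Ioi.prod measurableSet_Ioo)
    (f := fun p : ℝ × ℝ => p.1 • (g ((polarCoord.symm p).1 ^ 2 + (polarCoord.symm p).2 ^ 2) *
      |(polarCoord.symm p).1| ^ (2 * α₁ - 1) * |(polarCoord.symm p).2| ^ (2 * α₂ - 1)))
    (g := fun p : ℝ × ℝ => (g (p.1 ^ 2) * p.1 ^ (2*(α₁+α₂)-1)) *
      (|Real.cos p.2| ^ (2*α₁-1) * |Real.sin p.2| ^ (2*α₂-1))) ?_]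
  · rw [show (volume : Measure (ℝ × ℝ)) = (volume : Measure ℝ).prod volume from
      (MeasureTheory.Measure.volume_eq_prod ℝ ℝ), ← Measure.prod_restrict,
      integral_prod_mul (fun r : ℝ => g (r ^ 2) * r ^ (2*(α₁+α₂)-1))
        (fun θ : ℝ => |Real.cos θ| ^ (2*α₁-1) * |Real.sin θ| ^ (2*α₂-1)),
      angular hα₁ hα₂]
    have hB := beta_value hα₂ hα₁
    rw [add_comm α₂ α₁] at hB
    have hB' : (∫ t in Set.Ioo (0:ℝ) 1, t ^ (α₂-1) * (1-t) ^ (α₁-1))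
        = Real.Gamma α₂ * Real.Gamma α₁ / Real.Gamma (α₁ + α₂) := by
      field_simp
      linarith [hB]
    have hR : (∫ r in Set.Ioi (0:ℝ), g (r ^ 2) * r ^ (2*(α₁+α₂)-1))
        = (∫ x in Set.Ioi (0:ℝ), g x * x ^ (α₁ + α₂ - 1)) / 2 := by linarith [hrad]
    rw [hB', hR]
    linear_combination hnorm
  · rintro ⟨r, θ⟩ ⟨hr, hθ⟩
    simp only [Set.mem_Ioi] at hr
    have hsymm : polarCoord.symm (r, θ) = (r * Real.cos θ, r * Real.sin θ) := rfl
    dsimp only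
    rw [hsymm]
    have hsq : (r * Real.cos θ) ^ 2 + (r * Real.sin θ) ^ 2 = r ^ 2 := by
      linear_combination r ^ 2 * Real.sin_sq_add_cos_sq θ
    have habs1 : |r * Real.cos θ| ^ (2*α₁-1) = r ^ (2*α₁-1) * |Real.cos θ| ^ (2*α₁-1) := by
      rw [abs_mul, abs_of_pos hr, Real.mul_rpow hr.le (abs_nonneg _)]
    have habs2 : |r * Real.sin θ| ^ (2*α₂-1) = r ^ (2*α₂-1) * |Real.sin θ| ^ (2*α₂-1) := by
      rw [abs_mul, abs_of_pos hr, Real.mul_rpow hr.le (abs_nonneg _)]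
    have key : r ^ (2*(α₁+α₂)-1 : ℝ) = r * (r ^ (2*α₁-1) * r ^ (2*α₂-1)) := by
      rw [show (2*(α₁+α₂)-1 : ℝ) = 1 + (2*α₁-1 + (2*α₂-1)) by ring,
        Real.rpow_add hr, Real.rpow_add hr, Real.rpow_one]
    rw [smul_eq_mul, hsq, habs1, habs2]
    linear_combination -(g (r ^ 2) * |Real.cos θ| ^ (2*α₁-1) * |Real.sin θ| ^ (2*α₂-1)) * key
end

section
/- Let w be the scaling function of a distribution F in the Gumbel max-domain of attraction. Then w is self-neglecting: for every x ∈ ℝ, lim_{u→∞} w(u + x/w(u))/w(u) = 1. -/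
open Filter MeasureTheory Set Topology

namespace GumbelSN

variable {F w H W : ℝ → ℝ}




lemma ratio_identity (hw : ∀ u, 0 < w u) (hF : ∀ u, 0 < 1 - F u) (hHpos : ∀ u, 0 < H u)
    (hwH : ∀ u, w u * H u = 1 - F u)
    (hHdiff : ∀ a b : ℝ, a ≤ b → H a - H b = ∫ t in a..b, (1 - F t))
    (u y z : ℝ) (hyz : y ≤ z) :
    H (u + y / w u) / H u - H (u + z / w u) / H u
      = ∫ t in y..z, (1 - F (u + t / w u)) / (1 - F u) := by
  have hwu := hw u
  have h1 : u + y / w u ≤ u + z / w u := by gcongr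
  have h2 := hHdiff _ _ h1
  have h4 : (∫ t in y..z, (1 - F (u + t / w u)))
      = w u * ∫ s in (u + y / w u)..(u + z / w u), (1 - F s) := by
    rw [intervalIntegral.integral_comp_add_div (fun s => 1 - F s) hwu.ne']
    simp [smul_eq_mul]
  rw [intervalIntegral.integral_div, h4, ← h2, ← hwH u]
  have hHu := (hHpos u).ne'
  have hHy := (hHpos (u + y / w u)).ne'
  field_simp





lemma g_intOn (hw : ∀ u, 0 < w u)
    (hII : ∀ a b : ℝ, IntervalIntegrable (fun s => 1 - F s) volume a b)
    (u y z : ℝ) (hyz : y ≤ z) :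
    IntegrableOn (fun t => (1 - F (u + t / w u)) / (1 - F u)) (Set.Ioc y z) := by
  have hwu := hw u
  have h0 : IntervalIntegrable (fun s => 1 - F s) volume (u + y / w u) (u + z / w u) := hII _ _
  have h1 := (h0.comp_add_left u).comp_mul_right (c := (w u)⁻¹)
  have h2 : IntervalIntegrable (fun t => 1 - F (u + t / w u)) volume y z := by
    have e1 : (u + y / w u - u) / (w u)⁻¹ = y := by field_simp; ring
    have e2 : (u + z / w u - u) / (w u)⁻¹ = z := by field_simp; ring
    rw [e1, e2] at h1
    apply h1.congr
    intro t _
    simp only [div_eq_mul_inv]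
  exact (intervalIntegrable_iff_integrableOn_Ioc_of_le hyz).mp (h2.div_const _)

lemma min_integral_tendsto
    (hw : ∀ u, 0 < w u) (hF : ∀ u, 0 < 1 - F u)
    (hmeas : Measurable fun s => 1 - F s)
    (hGumbel : ∀ x : ℝ,
      Tendsto (fun u => (1 - F (u + x / w u)) / (1 - F u)) atTop (nhds (Real.exp (-x))))
    (y z : ℝ) (hyz : y ≤ z) :
    Tendsto (fun u => ∫ t in Set.Ioc y z,
        min ((1 - F (u + t / w u)) / (1 - F u)) (Real.exp (-y))) atTop
      (nhds (Real.exp (-y) - Real.exp (-z))) := by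
  have key : Tendsto (fun u => ∫ t in Set.Ioc y z,
      min ((1 - F (u + t / w u)) / (1 - F u)) (Real.exp (-y))) atTop
      (nhds (∫ t in Set.Ioc y z, min (Real.exp (-t)) (Real.exp (-y)))) := by
    apply tendsto_integral_filter_of_dominated_convergence
        (bound := fun _ => Real.exp (-y))
    · filter_upwards with u
      apply Measurable.aestronglyMeasurable
      exact ((hmeas.comp (measurable_const.add (measurable_id.div_const (w u)))).div_const
        _).min measurable_const
    · filter_upwards with u
      filter_upwards with t
      have hnn : 0 ≤ min ((1 - F (u + t / w u)) / (1 - F u)) (Real.exp (-y)) :=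
        le_min (div_nonneg (hF _).le (hF _).le) (Real.exp_pos _).le
      rw [Real.norm_eq_abs, abs_of_nonneg hnn]
      exact min_le_right _ _
    · exact integrableOn_const measure_Ioc_lt_top.ne
    · filter_upwards with t
      exact (hGumbel t).min tendsto_const_nhds
  have heq : (∫ t in Set.Ioc y z, min (Real.exp (-t)) (Real.exp (-y)))
      = Real.exp (-y) - Real.exp (-z) := by
    have : EqOn (fun t => min (Real.exp (-t)) (Real.exp (-y))) (fun t => Real.exp (-t))
        (Set.Ioc y z) := by
      intro t ht
      exact min_eq_left (Real.exp_le_exp.2 (neg_le_neg ht.1.le))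
    rw [setIntegral_congr_fun measurableSet_Ioc this, ← intervalIntegral.integral_of_le hyz]
    rw [intervalIntegral.integral_comp_neg (fun t => Real.exp t)]
    rw [integral_exp]
  rwa [heq] at key





lemma fratio_nonneg (hw : ∀ u, 0 < w u) (hF : ∀ u, 0 < 1 - F u) (hHpos : ∀ u, 0 < H u)
    (hwH : ∀ u, w u * H u = 1 - F u)
    (hHdiff : ∀ a b : ℝ, a ≤ b → H a - H b = ∫ t in a..b, (1 - F t))
    (hII : ∀ a b : ℝ, IntervalIntegrable (fun s => 1 - F s) volume a b)
    (hmeas : Measurable fun s => 1 - F s)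
    (hGumbel : ∀ x : ℝ,
      Tendsto (fun u => (1 - F (u + x / w u)) / (1 - F u)) atTop (nhds (Real.exp (-x))))
    (ratio_identity : ∀ (u y z : ℝ), y ≤ z →
      H (u + y / w u) / H u - H (u + z / w u) / H u
        = ∫ t in y..z, (1 - F (u + t / w u)) / (1 - F u))
    (g_intOn : ∀ (u y z : ℝ), y ≤ z →
      IntegrableOn (fun t => (1 - F (u + t / w u)) / (1 - F u)) (Set.Ioc y z))
    (min_integral_tendsto : ∀ (y z : ℝ), y ≤ z →
      Tendsto (fun u => ∫ t in Set.Ioc y z,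
          min ((1 - F (u + t / w u)) / (1 - F u)) (Real.exp (-y))) atTop
        (nhds (Real.exp (-y) - Real.exp (-z)))) :
    ∀ y : ℝ, 0 ≤ y → Tendsto (fun u => H (u + y / w u) / H u) atTop (nhds (Real.exp (-y))) := by
  have hcomp : ∀ (y' z' : ℝ), y' ≤ z' → ∀ u : ℝ,
      (∫ t in Set.Ioc y' z', min ((1 - F (u + t / w u)) / (1 - F u)) (Real.exp (-y')))
        ≤ H (u + y' / w u) / H u - H (u + z' / w u) / H u := by
    intro y' z' h u
    rw [ratio_identity u y' z' h, intervalIntegral.integral_of_le h]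
    apply setIntegral_mono_on
    · apply Integrable.mono' (integrableOn_const (C := Real.exp (-y')) measure_Ioc_lt_top.ne)
      · apply Measurable.aestronglyMeasurable
        exact ((hmeas.comp (measurable_const.add (measurable_id.div_const (w u)))).div_const
          _).min measurable_const
      · filter_upwards with t
        have hnn : 0 ≤ min ((1 - F (u + t / w u)) / (1 - F u)) (Real.exp (-y')) :=
          le_min (div_nonneg (hF _).le (hF _).le) (Real.exp_pos _).le
        rw [Real.norm_eq_abs, abs_of_nonneg hnn]
        exact min_le_right _ _
    · exact g_intOn u y' z' h
    · exact measurableSet_Ioc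
    · intro t _
      exact min_le_left _ _
  intro y hy
  rw [tendsto_order]
  constructor
  · intro c hc
    obtain ⟨z, h1, h2⟩ := ((Real.tendsto_exp_neg_atTop_nhds_zero.eventually_lt_const
        (show (0:ℝ) < Real.exp (-y) - c by linarith)).and (eventually_ge_atTop y)).exists
    have hev := (min_integral_tendsto y z h2).eventually_const_lt
        (show c < Real.exp (-y) - Real.exp (-z) by linarith)
    filter_upwards [hev] with u hu
    have h3 := hcomp y z h2 u
    have h4 : 0 ≤ H (u + z / w u) / H u := div_nonneg (hHpos _).le (hHpos _).le
    linarith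
  · intro c hc
    have hev := (min_integral_tendsto 0 y hy).eventually_const_lt
        (show 1 - c < Real.exp (-0) - Real.exp (-y) by
          rw [neg_zero, Real.exp_zero]; linarith)
    filter_upwards [hev] with u hu
    have h2 := hcomp 0 y hy u
    have hf0 : H (u + 0 / w u) / H u = 1 := by
      rw [zero_div, add_zero, div_self (hHpos u).ne']
    rw [hf0] at h2
    rw [neg_zero, Real.exp_zero] at hu h2
    linarith





lemma key (hw : ∀ u, 0 < w u) (hWmono : StrictMono W) (hWcont : Continuous W)
    (hWtop : Tendsto W atTop atTop)
    (hL1W : ∀ y : ℝ, 0 ≤ y → Tendsto (fun u => W (u + y / w u) - W u) atTop (nhds y))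
    (y c₁ c₂ : ℝ) (hy : 0 < y) (hc₁ : c₁ < y) (hc₂ : y < c₂) :
    ∀ᶠ u in atTop, ∃ v, W v = W u - y ∧ v ≤ u ∧ c₁ < (u - v) * w u ∧ (u - v) * w u < c₂ := by
  classical
  -- choose ε
  obtain ⟨ε, hεa, hεb, hε_mem⟩ : ∃ ε : ℝ, c₁ < (y - ε) * ((1 - ε) / (1 + ε)) ∧
      (y + ε) * ((1 + ε) / (1 - ε)) < c₂ ∧ ε ∈ Set.Ioo 0 (min y 1) := by
    have t1 : Tendsto (fun ε : ℝ => (y - ε) * ((1 - ε) / (1 + ε))) (𝓝[>] (0:ℝ)) (𝓝 y) := by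
      have h0 : ContinuousAt (fun ε : ℝ => (y - ε) * ((1 - ε) / (1 + ε))) 0 := by
        apply ContinuousAt.mul (by fun_prop)
        exact ContinuousAt.div (by fun_prop) (by fun_prop) (by norm_num)
      have h1 := h0.tendsto.mono_left (nhdsWithin_le_nhds (s := Set.Ioi (0:ℝ)))
      simpa using h1
    have t2 : Tendsto (fun ε : ℝ => (y + ε) * ((1 + ε) / (1 - ε))) (𝓝[>] (0:ℝ)) (𝓝 y) := by
      have h0 : ContinuousAt (fun ε : ℝ => (y + ε) * ((1 + ε) / (1 - ε))) 0 := by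
        apply ContinuousAt.mul (by fun_prop)
        exact ContinuousAt.div (by fun_prop) (by fun_prop) (by norm_num)
      have h1 := h0.tendsto.mono_left (nhdsWithin_le_nhds (s := Set.Ioi (0:ℝ)))
      simpa using h1
    have e1 := t1.eventually_const_lt hc₁
    have e2 := t2.eventually_lt_const hc₂
    have e3 : ∀ᶠ ε in 𝓝[>] (0:ℝ), ε ∈ Set.Ioo 0 (min y 1) :=
      Ioo_mem_nhdsGT (lt_min hy one_pos)
    obtain ⟨ε, h⟩ := ((e1.and e2).and e3).exists
    exact ⟨ε, h.1.1, h.1.2, h.2⟩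
  have hε0 : 0 < ε := hε_mem.1
  have hεy : ε < y := lt_of_lt_of_le hε_mem.2 (min_le_left _ _)
  have hε1 : ε < 1 := lt_of_lt_of_le hε_mem.2 (min_le_right _ _)
  -- the companion point v
  set vv : ℝ → ℝ := fun u => if h : ∃ p, p ∈ Set.Icc 0 u ∧ W p = W u - y then h.choose else 0
    with hvv_def
  have hvv : ∀ᶠ u in atTop, vv u ∈ Set.Icc 0 u ∧ W (vv u) = W u - y := by
    filter_upwards [hWtop.eventually_ge_atTop (W 0 + y), eventually_ge_atTop (0:ℝ)]
      with u hu1 hu2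
    have hex : ∃ p, p ∈ Set.Icc 0 u ∧ W p = W u - y := by
      have himg := intermediate_value_Icc hu2 hWcont.continuousOn
      have hmem : W u - y ∈ Set.Icc (W 0) (W u) := ⟨by linarith, by linarith⟩
      obtain ⟨p, hp, hpe⟩ := himg hmem
      exact ⟨p, hp, hpe⟩
    simp only [hvv_def]
    rw [dif_pos hex]
    exact hex.choose_spec
  have hvtop : Tendsto vv atTop atTop := by
    rw [tendsto_atTop]
    intro M
    filter_upwards [hvv, hWtop.eventually_ge_atTop (W M + y)] with u h1 h2
    by_contra hlt
    push_neg at hlt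
    have hWlt : W (vv u) < W M := hWmono hlt
    rw [h1.2] at hWlt
    linarith
  -- eventual facts from L1W
  have A1 := (((hL1W (y + ε) (by linarith)).comp hvtop).eventually_const_lt
    (show y + ε/2 < y + ε by linarith))
  have A2 := (((hL1W (y - ε) (by linarith)).comp hvtop).eventually_lt_const
    (show y - ε < y - ε/2 by linarith))
  have A3a := (((hL1W (y + 1) (by linarith)).comp hvtop).eventually_lt_const
    (show y + 1 < y + 1 + ε/2 by linarith))
  have A3b := (((hL1W (y + 1) (by linarith)).comp hvtop).eventually_const_lt
    (show y + 1 - ε/2 < y + 1 by linarith))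
  have A4 := ((hL1W (1 + ε) (by linarith)).eventually_const_lt
    (show 1 + ε/2 < 1 + ε by linarith))
  have A5 := ((hL1W (1 - ε) (by linarith)).eventually_lt_const
    (show 1 - ε < 1 - ε/2 by linarith))
  filter_upwards [hvv, A1, A2, A3a, A3b, A4, A5] with u hv a1 a2 a3a a3b a4 a5
  simp only [Function.comp_apply] at a1 a2 a3a a3b
  obtain ⟨⟨hv0, hvu⟩, hWv⟩ := hv
  set v := vv u with hv_def
  have hwv := hw v
  have hwu := hw u
  -- spatial comparisons
  have E1 : u < v + (y + ε) / w v := by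
    by_contra hle
    push_neg at hle
    have hm2 : W (v + (y + ε) / w v) ≤ W u := hWmono.monotone hle
    rw [hWv] at a1
    linarith
  have E2 : v + (y - ε) / w v < u := by
    apply hWmono.lt_iff_lt.1
    rw [hWv] at a2
    linarith
  have E3 : v + (y + 1) / w v < u + (1 + ε) / w u := by
    apply hWmono.lt_iff_lt.1
    rw [hWv] at a3a
    linarith
  have E4 : u + (1 - ε) / w u < v + (y + 1) / w v := by
    apply hWmono.lt_iff_lt.1
    rw [hWv] at a3b
    linarith
  -- ratio bounds
  have hww2 : (1 - ε) * w u < (1 + ε) * w v := by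
    have hs1 : (y + 1) / w v - (y + ε) / w v = (1 - ε) / w v := by
      rw [div_sub_div_same]
      ring_nf
    have h5 : (1 - ε) / w v < (1 + ε) / w u := by
      rw [← hs1]; linarith
    rw [div_lt_div_iff₀ hwv hwu] at h5
    linarith
  have hww1 : (1 - ε) * w v < (1 + ε) * w u := by
    have hs1 : (y + 1) / w v - (y - ε) / w v = (1 + ε) / w v := by
      rw [div_sub_div_same]
      ring_nf
    have h6 : (1 - ε) / w u < (1 + ε) / w v := by
      rw [← hs1]; linarith
    rw [div_lt_div_iff₀ hwu hwv] at h6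
    linarith
  have hiii1 : y - ε < (u - v) * w v := (div_lt_iff₀ hwv).1 (by linarith)
  have hiii2 : (u - v) * w v < y + ε := (lt_div_iff₀ hwv).1 (by linarith)
  have huv : 0 < u - v := by
    have hq := div_pos (show (0:ℝ) < y - ε by linarith) hwv
    linarith
  refine ⟨v, hWv, hvu, ?_, ?_⟩
  · have hεa' : c₁ * (1 + ε) < (y - ε) * (1 - ε) := by
      have h := mul_lt_mul_of_pos_right hεa (show (0:ℝ) < 1 + ε by linarith)
      rw [mul_assoc, div_mul_cancel₀ _ (show (1:ℝ) + ε ≠ 0 by linarith)] at h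
      exact h
    have k1 := mul_lt_mul_of_pos_right hiii1 (show (0:ℝ) < 1 - ε by linarith)
    have k2 := mul_lt_mul_of_pos_left hww1 huv
    have k3 : c₁ * (1 + ε) < ((u - v) * w u) * (1 + ε) := by
      calc c₁ * (1 + ε) < (y - ε) * (1 - ε) := hεa'
        _ < (u - v) * w v * (1 - ε) := k1
        _ = (u - v) * ((1 - ε) * w v) := by ring
        _ < (u - v) * ((1 + ε) * w u) := k2
        _ = ((u - v) * w u) * (1 + ε) := by ring
    exact lt_of_mul_lt_mul_right k3 (by linarith)
  · have hεb' : (y + ε) * (1 + ε) < c₂ * (1 - ε) := by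
      have h := mul_lt_mul_of_pos_right hεb (show (0:ℝ) < 1 - ε by linarith)
      rw [mul_assoc, div_mul_cancel₀ _ (show (1:ℝ) - ε ≠ 0 by linarith)] at h
      exact h
    have k1 := mul_lt_mul_of_pos_right hiii2 (show (0:ℝ) < 1 + ε by linarith)
    have k2 := mul_lt_mul_of_pos_left hww2 huv
    have k3 : ((u - v) * w u) * (1 - ε) < c₂ * (1 - ε) := by
      calc ((u - v) * w u) * (1 - ε) = (u - v) * ((1 - ε) * w u) := by ring
        _ < (u - v) * ((1 + ε) * w v) := k2
        _ = (u - v) * w v * (1 + ε) := by ring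
        _ < (y + ε) * (1 + ε) := k1
        _ < c₂ * (1 - ε) := hεb'
    exact lt_of_mul_lt_mul_right k3 (by linarith)





lemma Wneg (hw : ∀ u, 0 < w u) (hWmono : StrictMono W)
    (hkey : ∀ y c₁ c₂ : ℝ, 0 < y → c₁ < y → y < c₂ →
      ∀ᶠ u in atTop, ∃ v, W v = W u - y ∧ v ≤ u ∧ c₁ < (u - v) * w u ∧ (u - v) * w u < c₂)
    (a : ℝ) (ha : 0 < a) :
    Tendsto (fun u => W u - W (u - a / w u)) atTop (nhds a) := by
  rw [tendsto_order]
  constructor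
  · intro c hc
    set y := (max c 0 + a) / 2 with hy_def
    have hm0 : 0 ≤ max c 0 := le_max_right _ _
    have hma : max c 0 < a := max_lt hc ha
    have hy0 : 0 < y := by rw [hy_def]; linarith
    have hya : y < a := by rw [hy_def]; linarith
    have hcy : c < y := by
      have := le_max_left c 0
      rw [hy_def]; linarith
    have hk := hkey y (y / 2) a hy0 (by linarith) hya
    filter_upwards [hk] with u hu
    obtain ⟨v, hWv, hvu, hb1, hb2⟩ := hu
    have hwu := hw u
    have h1 : u - v < a / w u := (lt_div_iff₀ hwu).2 hb2
    have h2 : u - a / w u < v := by linarith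
    have h3 : W (u - a / w u) < W v := hWmono h2
    rw [hWv] at h3
    linarith
  · intro c hc
    set y := (a + c) / 2 with hy_def
    have hy0 : 0 < y := by rw [hy_def]; linarith
    have hay : a < y := by rw [hy_def]; linarith
    have hyc : y < c := by rw [hy_def]; linarith
    have hk := hkey y a c hy0 hay hyc
    filter_upwards [hk] with u hu
    obtain ⟨v, hWv, hvu, hb1, hb2⟩ := hu
    have hwu := hw u
    have h1 : a / w u < u - v := (div_lt_iff₀ hwu).2 hb1
    have h2 : v < u - a / w u := by linarith
    have h3 : W v < W (u - a / w u) := hWmono h2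
    rw [hWv] at h3
    linarith

end GumbelSN

open Filter

/-- MAIN -/
theorem gumbel_mda_scaling_self_neglecting
    (F w : ℝ → ℝ)
    (hw : ∀ u, 0 < w u) (hw_meas : Measurable w)
    (hF_pos : ∀ u, 0 < 1 - F u)
    (hw_canonical : ∀ u, w u = (1 - F u) / ∫ s in Set.Ioi u, (1 - F s))
    (hGumbel : ∀ x : ℝ,
      Tendsto (fun u => (1 - F (u + x / w u)) / (1 - F u)) atTop (nhds (Real.exp (-x)))) :
    ∀ x : ℝ, Tendsto (fun u => w (u + x / w u) / w u) atTop (nhds 1) := by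
  classical
  intro x
  set H : ℝ → ℝ := fun u => ∫ s in Set.Ioi u, (1 - F s) with hHdef
  have hcan : ∀ u, w u = (1 - F u) / H u := hw_canonical
  have hInt : ∀ c : ℝ, MeasureTheory.IntegrableOn (fun s => 1 - F s) (Set.Ioi c) := by
    intro c
    by_contra hno
    have h0 : H c = 0 := MeasureTheory.integral_undef hno
    have hwc := hw c
    rw [hcan c, h0, div_zero] at hwc
    exact lt_irrefl _ hwc
  have hHpos : ∀ u, 0 < H u := by
    intro u
    have hne : H u ≠ 0 := by
      intro h0
      have hwu := hw u
      rw [hcan u, h0, div_zero] at hwu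
      exact lt_irrefl _ hwu
    have hnn : 0 ≤ H u :=
      MeasureTheory.setIntegral_nonneg measurableSet_Ioi (fun s _ => (hF_pos s).le)
    exact lt_of_le_of_ne hnn (Ne.symm hne)
  have hwH : ∀ u, w u * H u = 1 - F u := by
    intro u
    rw [hcan u, div_mul_cancel₀ _ (hHpos u).ne']
  have hHdiff : ∀ a b : ℝ, a ≤ b → H a - H b = ∫ t in a..b, (1 - F t) := by
    intro a b hab
    have h2 : H a = (∫ t in Set.Ioc a b, (1 - F t)) + H b := by
      have hsplit : Set.Ioi a = Set.Ioc a b ∪ Set.Ioi b := (Set.Ioc_union_Ioi_eq_Ioi hab).symm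
      have := MeasureTheory.setIntegral_union (Set.Ioc_disjoint_Ioi le_rfl) measurableSet_Ioi
        ((hInt a).mono_set Set.Ioc_subset_Ioi_self) (hInt b)
        (f := fun s => 1 - F s) (μ := MeasureTheory.volume)
      calc H a = ∫ s in Set.Ioc a b ∪ Set.Ioi b, (1 - F s) := by rw [← hsplit]
        _ = _ := this
    rw [intervalIntegral.integral_of_le hab]
    linarith
  have hII : ∀ a b : ℝ, IntervalIntegrable (fun s => 1 - F s) MeasureTheory.volume a b := by
    intro a b
    rw [intervalIntegrable_iff]
    apply (hInt (min a b - 1)).mono_set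
    intro t ht
    have h1 : min a b < t := ht.1
    exact Set.mem_Ioi.2 (by linarith)
  have hHcont : Continuous H := by
    have hrep : ∀ u, H 0 - ∫ t in (0:ℝ)..u, (1 - F t) = H u := by
      intro u
      rcases le_total 0 u with h | h
      · have := hHdiff 0 u h; linarith
      · have h1 := hHdiff u 0 h
        have hs : (∫ t in (0:ℝ)..u, (1 - F t)) = -∫ t in u..(0:ℝ), (1 - F t) :=
          intervalIntegral.integral_symm u 0
        rw [hs]; linarith
    exact (continuous_const.sub (intervalIntegral.continuous_primitive hII 0)).congr hrep
  have hmeas1F : Measurable fun s => 1 - F s := by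
    have heq : (fun s => 1 - F s) = fun s => w s * H s := funext fun s => (hwH s).symm
    rw [heq]
    exact hw_meas.mul hHcont.measurable
  have hHanti : StrictAnti H := by
    intro a b hab
    have h := hHdiff a b hab.le
    have hpos : 0 < ∫ t in a..b, (1 - F t) := by
      rw [intervalIntegral.integral_of_le hab.le]
      rw [MeasureTheory.setIntegral_pos_iff_support_of_nonneg_ae
        (Filter.Eventually.of_forall fun t => (hF_pos t).le)
        ((hInt (min a b - 1)).mono_set (fun t ht => Set.mem_Ioi.2
          (by have := ht.1; have := min_le_left a b; linarith)))]
      have hsup : Function.support (fun s => 1 - F s) ∩ Set.Ioc a b = Set.Ioc a b :=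
        Set.inter_eq_self_of_subset_right (fun t _ => (hF_pos t).ne')
      rw [hsup, Real.volume_Ioc]
      simp [hab]
    linarith
  have hH0 : Tendsto H atTop (nhds 0) := by
    have h := MeasureTheory.tendsto_setIntegral_of_antitone
      (s := fun r : ℝ => Set.Ioi r) (f := fun s => 1 - F s) (μ := MeasureTheory.volume)
      (fun i => measurableSet_Ioi) (fun i j hij => Set.Ioi_subset_Ioi hij) ⟨0, hInt 0⟩
    have hint : ⋂ r : ℝ, Set.Ioi r = ∅ := by
      apply Set.eq_empty_iff_forall_notMem.2
      intro p hp
      exact lt_irrefl p (Set.mem_iInter.1 hp p)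
    rw [hint] at h
    simpa using h
  -- the function W = -log H
  set W : ℝ → ℝ := fun u => -Real.log (H u) with hWdef
  have hWmono : StrictMono W := by
    intro a b hab
    have h1 := hHanti hab
    have hlog := Real.log_lt_log (hHpos b) h1
    simp only [hWdef]
    linarith
  have hWcont : Continuous W := by
    rw [continuous_iff_continuousAt]
    intro u
    exact ((Real.continuousAt_log (hHpos u).ne').comp hHcont.continuousAt).neg
  have hWtop : Tendsto W atTop atTop := by
    have h1 : Tendsto H atTop (nhdsWithin 0 (Set.Ioi 0)) :=
      tendsto_nhdsWithin_of_tendsto_nhds_of_eventually_within _ hH0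
        (Filter.Eventually.of_forall fun u => hHpos u)
    have h2 := Real.tendsto_log_nhdsGT_zero.comp h1
    exact tendsto_neg_atTop_iff.2 h2
  have hWexp : ∀ a b : ℝ, Real.exp (W a - W b) = H b / H a := by
    intro a b
    simp only [hWdef]
    rw [show -Real.log (H a) - -Real.log (H b) = Real.log (H b) - Real.log (H a) by ring,
      Real.exp_sub, Real.exp_log (hHpos b), Real.exp_log (hHpos a)]
  -- positive case
  have hfr_pos : ∀ y : ℝ, 0 ≤ y →
      Tendsto (fun u => H (u + y / w u) / H u) atTop (nhds (Real.exp (-y))) :=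
    GumbelSN.fratio_nonneg hw hF_pos hHpos hwH hHdiff hII hmeas1F hGumbel
      (GumbelSN.ratio_identity hw hF_pos hHpos hwH hHdiff)
      (fun u y z h => GumbelSN.g_intOn hw hII u y z h)
      (fun y z h => GumbelSN.min_integral_tendsto hw hF_pos hmeas1F hGumbel y z h)
  have hL1W : ∀ y : ℝ, 0 ≤ y → Tendsto (fun u => W (u + y / w u) - W u) atTop (nhds y) := by
    intro y hy
    have h1 := (hfr_pos y hy).log (Real.exp_ne_zero _)
    rw [Real.log_exp] at h1
    have heq : ∀ u, -Real.log (H (u + y / w u) / H u) = W (u + y / w u) - W u := by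
      intro u
      rw [Real.log_div (hHpos _).ne' (hHpos _).ne']
      simp only [hWdef]
      ring
    have h2 := h1.neg
    rw [neg_neg] at h2
    exact h2.congr heq
  -- full ratio limit
  have hfr : Tendsto (fun u => H (u + x / w u) / H u) atTop (nhds (Real.exp (-x))) := by
    rcases le_or_gt 0 x with hx | hx
    · exact hfr_pos x hx
    · have ha : 0 < -x := by linarith
      have hneg := GumbelSN.Wneg hw hWmono
        (fun y c₁ c₂ hy h1 h2 => GumbelSN.key hw hWmono hWcont hWtop hL1W y c₁ c₂ hy h1 h2)
        (-x) ha
      have hexp := (Real.continuous_exp.tendsto (-x)).comp hneg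
      apply hexp.congr
      intro u
      simp only [Function.comp_apply]
      rw [hWexp]
      have harg : u - -x / w u = u + x / w u := by ring
      rw [harg]
  -- conclude
  have hinv : Tendsto (fun u => H u / H (u + x / w u)) atTop (nhds (Real.exp x)) := by
    have h1 := hfr.inv₀ (Real.exp_ne_zero _)
    have h2 : ∀ u, (H (u + x / w u) / H u)⁻¹ = H u / H (u + x / w u) := fun u => by
      rw [inv_div]
    have h3 : (Real.exp (-x))⁻¹ = Real.exp x := by rw [Real.exp_neg, inv_inv]
    rw [h3] at h1
    exact h1.congr h2
  have hmain := (hGumbel x).mul hinv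
  rw [← Real.exp_add, neg_add_cancel, Real.exp_zero] at hmain
  apply hmain.congr
  intro u
  rw [hcan (u + x / w u), hcan u]
  have h1 := (hHpos u).ne'
  have h2 := (hHpos (u + x / w u)).ne'
  have h3 := (hF_pos u).ne'
  have h4 := (hF_pos (u + x / w u)).ne'
  field_simp
end
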